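/- arXiv:1708.06671 — 5 statements merged into one kernel-verified Lean document; each statement's English description precedes it below -/
import Mathlib

section
/- Let τ ∈ ℝ, let Ω ⊆ ℝ² be open, and let u, v : Ω → ℝ be C² functions with v_x² + v_y² < 1 on Ω satisfying the twin relations u_x = v_y/ω̃ − τy and u_y = −v_x/ω̃ + τx on Ω, where ω̃ = (1 − v_x² − v_y²)^(1/2). Then u satisfies the minimal surface equation (1+β²)u_xx − 2αβ u_xy + (1+α²)u_yy = 0 on Ω, where α = u_x + τy and β = u_y − τx, and v satisfies the spacelike constant-mean-curvature-τ equation (1−v_y²)v_xx + 2 v_x v_y v_xy + (1−v_x²)v_yy = 2τ ω̃³ on Ω. -/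
/-- Partial derivative in the `x` direction. -/
noncomputable def px (f : ℝ × ℝ → ℝ) (p : ℝ × ℝ) : ℝ := fderiv ℝ f p (1, 0)

/-- Partial derivative in the `y` direction. -/
noncomputable def py (f : ℝ × ℝ → ℝ) (p : ℝ × ℝ) : ℝ := fderiv ℝ f p (0, 1)

/-- Lorentzian area element `ω̃ = (1 − v_x² − v_y²)^(1/2)` of the graph of `v`. -/
noncomputable def omegT (v : ℝ × ℝ → ℝ) (p : ℝ × ℝ) : ℝ :=
  Real.sqrt (1 - (px v p) ^ 2 - (py v p) ^ 2)

set_option maxHeartbeats 1000000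

/-- For a `C²` function, the mixed second partial derivatives agree. -/
lemma mixed_symm {f : ℝ × ℝ → ℝ} {p : ℝ × ℝ} (hf : ContDiffAt ℝ 2 f p) :
    py (px f) p = px (py f) p := by
  have hdf : DifferentiableAt ℝ (fderiv ℝ f) p :=
    (hf.fderiv_right (m := 1) (by norm_num)).differentiableAt one_ne_zero
  have hsym := hf.isSymmSndFDerivAt (by simp)
  have h1 : fderiv ℝ (px f) p = (fderiv ℝ (fderiv ℝ f) p).flip (1, 0) := by
    rw [show px f = (fun q => fderiv ℝ f q (1, 0)) from rfl]
    rw [fderiv_clm_apply hdf (differentiableAt_const _)]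
    simp
  have h2 : fderiv ℝ (py f) p = (fderiv ℝ (fderiv ℝ f) p).flip (0, 1) := by
    rw [show py f = (fun q => fderiv ℝ f q (0, 1)) from rfl]
    rw [fderiv_clm_apply hdf (differentiableAt_const _)]
    simp
  show fderiv ℝ (px f) p (0, 1) = fderiv ℝ (py f) p (1, 0)
  rw [h1, h2]
  simpa using hsym (0, 1) (1, 0)

/-- if `u, v` are `C²` and satisfy the twin relations, then `u`
satisfies the minimal surface equation in `Nil₃(τ)` and `v` satisfies the
spacelike CMC-`τ` equation in `𝕃³`. -/
theorem twin_relations_give_pdes (τ : ℝ) (Ω : Set (ℝ × ℝ)) (hΩ : IsOpen Ω)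
    (u v : ℝ × ℝ → ℝ)
    (hu : ContDiffOn ℝ 2 u Ω) (hv : ContDiffOn ℝ 2 v Ω)
    (hsp : ∀ p ∈ Ω, (px v p) ^ 2 + (py v p) ^ 2 < 1)
    (htwinx : ∀ p ∈ Ω, px u p = py v p / omegT v p - τ * p.2)
    (htwiny : ∀ p ∈ Ω, py u p = -px v p / omegT v p + τ * p.1) :
    ∀ p ∈ Ω,
      ((1 + (py u p - τ * p.1) ^ 2) * px (px u) p
          - 2 * (px u p + τ * p.2) * (py u p - τ * p.1) * py (px u) p
          + (1 + (px u p + τ * p.2) ^ 2) * py (py u) p = 0) ∧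
      ((1 - (py v p) ^ 2) * px (px v) p
          + 2 * px v p * py v p * py (px v) p
          + (1 - (px v p) ^ 2) * py (py v) p = 2 * τ * (omegT v p) ^ 3) := by
  intro p hp
  have hmem : Ω ∈ nhds p := hΩ.mem_nhds hp
  have hvp : ContDiffAt ℝ 2 v p := hv.contDiffAt hmem
  have hup : ContDiffAt ℝ 2 u p := hu.contDiffAt hmem
  have hdv : DifferentiableAt ℝ (fderiv ℝ v) p :=
    (hvp.fderiv_right (m := 1) (by norm_num)).differentiableAt one_ne_zero
  have hPd : DifferentiableAt ℝ (px v) p := hdv.clm_apply (differentiableAt_const _)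
  have hQd : DifferentiableAt ℝ (py v) p := hdv.clm_apply (differentiableAt_const _)
  have hP := hPd.hasFDerivAt
  have hQ := hQd.hasFDerivAt
  have h1 : (1 : ℝ) - px v p ^ 2 - py v p ^ 2 > 0 := by have := hsp p hp; linarith
  have hWpos : 0 < omegT v p := Real.sqrt_pos.2 h1
  have hWne : omegT v p ≠ 0 := ne_of_gt hWpos
  have hW2 : omegT v p ^ 2 = 1 - px v p ^ 2 - py v p ^ 2 := Real.sq_sqrt h1.le
  -- derivative of the function inside the square root
  have hg : HasFDerivAt (fun q : ℝ × ℝ => 1 - px v q ^ 2 - py v q ^ 2)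
      ((0 - (px v p • fderiv ℝ (px v) p + px v p • fderiv ℝ (px v) p))
        - (py v p • fderiv ℝ (py v) p + py v p • fderiv ℝ (py v) p)) p := by
    have h := ((hasFDerivAt_const (1:ℝ) p).sub (hP.mul hP)).sub (hQ.mul hQ)
    simp only [← pow_two] at h
    exact h
  have hW : HasFDerivAt (omegT v)
      ((1 / (2 * omegT v p)) •
        ((0 - (px v p • fderiv ℝ (px v) p + px v p • fderiv ℝ (px v) p))
          - (py v p • fderiv ℝ (py v) p + py v p • fderiv ℝ (py v) p))) p :=
    (Real.hasDerivAt_sqrt (ne_of_gt h1)).comp_hasFDerivAt_of_eq p hg rfl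
  have hWinv := (hasDerivAt_inv hWne).comp_hasFDerivAt p hW
  -- the first twin function
  have hE := (hQ.mul hWinv).sub (hasFDerivAt_snd.const_mul τ)
  have hE' : HasFDerivAt (fun q : ℝ × ℝ => py v q * (omegT v q)⁻¹ - τ * q.2) _ p := hE
  have heqE : px u =ᶠ[nhds p] fun q : ℝ × ℝ => py v q * (omegT v q)⁻¹ - τ * q.2 := by
    filter_upwards [hmem] with q hq
    rw [htwinx q hq, div_eq_mul_inv]
  have hfeE := heqE.fderiv_eq.trans hE'.fderiv
  -- the second twin function
  have hF := ((hP.mul hWinv).neg).add (hasFDerivAt_fst.const_mul τ)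
  have hF' : HasFDerivAt (fun q : ℝ × ℝ => -(px v q * (omegT v q)⁻¹) + τ * q.1) _ p := hF
  have heqF : py u =ᶠ[nhds p] fun q : ℝ × ℝ => -(px v q * (omegT v q)⁻¹) + τ * q.1 := by
    filter_upwards [hmem] with q hq
    rw [htwiny q hq, neg_div, div_eq_mul_inv]
  have hfeF := heqF.fderiv_eq.trans hF'.fderiv
  -- the four second partial derivatives of u
  have hxx : px (px u) p = (px (py v) p * omegT v p ^ 2
      + py v p * (px v p * px (px v) p + py v p * px (py v) p)) / omegT v p ^ 3 := by
    have h0 : px (px u) p = fderiv ℝ (px u) p (1, 0) := rfl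
    rw [h0, hfeE]
    simp only [ContinuousLinearMap.coe_sub', ContinuousLinearMap.coe_smul',
      ContinuousLinearMap.add_apply, ContinuousLinearMap.smul_apply, Pi.sub_apply,
      Pi.smul_apply, ContinuousLinearMap.sub_apply, ContinuousLinearMap.zero_apply,
      ContinuousLinearMap.coe_snd', smul_eq_mul, Function.comp_apply]
    rw [show fderiv ℝ (px v) p (1, 0) = px (px v) p from rfl,
        show fderiv ℝ (py v) p (1, 0) = px (py v) p from rfl]
    field_simp
    ring
  have hxy : py (px u) p = (py (py v) p * omegT v p ^ 2
      + py v p * (px v p * py (px v) p + py v p * py (py v) p)) / omegT v p ^ 3 - τ := by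
    have h0 : py (px u) p = fderiv ℝ (px u) p (0, 1) := rfl
    rw [h0, hfeE]
    simp only [ContinuousLinearMap.coe_sub', ContinuousLinearMap.coe_smul',
      ContinuousLinearMap.add_apply, ContinuousLinearMap.smul_apply, Pi.sub_apply,
      Pi.smul_apply, ContinuousLinearMap.sub_apply, ContinuousLinearMap.zero_apply,
      ContinuousLinearMap.coe_snd', smul_eq_mul, Function.comp_apply]
    rw [show fderiv ℝ (px v) p (0, 1) = py (px v) p from rfl,
        show fderiv ℝ (py v) p (0, 1) = py (py v) p from rfl]
    field_simp
    ring
  have hyx : px (py u) p = -((px (px v) p * omegT v p ^ 2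
      + px v p * (px v p * px (px v) p + py v p * px (py v) p)) / omegT v p ^ 3) + τ := by
    have h0 : px (py u) p = fderiv ℝ (py u) p (1, 0) := rfl
    rw [h0, hfeF]
    simp only [ContinuousLinearMap.coe_add', ContinuousLinearMap.coe_neg',
      ContinuousLinearMap.coe_smul', ContinuousLinearMap.add_apply,
      ContinuousLinearMap.smul_apply, Pi.add_apply, Pi.neg_apply, Pi.sub_apply,
      Pi.smul_apply, ContinuousLinearMap.sub_apply, ContinuousLinearMap.neg_apply,
      ContinuousLinearMap.zero_apply, ContinuousLinearMap.coe_fst', smul_eq_mul,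
      Function.comp_apply]
    rw [show fderiv ℝ (px v) p (1, 0) = px (px v) p from rfl,
        show fderiv ℝ (py v) p (1, 0) = px (py v) p from rfl]
    field_simp
    ring
  have hyy : py (py u) p = -((py (px v) p * omegT v p ^ 2
      + px v p * (px v p * py (px v) p + py v p * py (py v) p)) / omegT v p ^ 3) := by
    have h0 : py (py u) p = fderiv ℝ (py u) p (0, 1) := rfl
    rw [h0, hfeF]
    simp only [ContinuousLinearMap.coe_add', ContinuousLinearMap.coe_neg',
      ContinuousLinearMap.coe_smul', ContinuousLinearMap.add_apply,
      ContinuousLinearMap.smul_apply, Pi.add_apply, Pi.neg_apply, Pi.sub_apply,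
      Pi.smul_apply, ContinuousLinearMap.sub_apply, ContinuousLinearMap.neg_apply,
      ContinuousLinearMap.zero_apply, ContinuousLinearMap.coe_fst', smul_eq_mul,
      Function.comp_apply]
    rw [show fderiv ℝ (px v) p (0, 1) = py (px v) p from rfl,
        show fderiv ℝ (py v) p (0, 1) = py (py v) p from rfl]
    field_simp
    ring
  -- symmetry of second derivatives
  have hsymv : py (px v) p = px (py v) p := mixed_symm hvp
  have hsymu : py (px u) p = px (py u) p := mixed_symm hup
  rw [hxy, hyx] at hsymu
  -- the CMC equation for v, cleared of denominators
  have key : py (py v) p * omegT v p ^ 2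
      + py v p * (px v p * py (px v) p + py v p * py (py v) p)
      + (px (px v) p * omegT v p ^ 2
      + px v p * (px v p * px (px v) p + py v p * px (py v) p))
      = 2 * τ * omegT v p ^ 3 := by
    have h3 : (py (py v) p * omegT v p ^ 2
        + py v p * (px v p * py (px v) p + py v p * py (py v) p)) / omegT v p ^ 3
        + (px (px v) p * omegT v p ^ 2
        + px v p * (px v p * px (px v) p + py v p * px (py v) p)) / omegT v p ^ 3
        = 2 * τ := by linarith [hsymu]
    rw [← add_div, div_eq_iff (pow_ne_zero 3 hWne)] at h3
    linarith [h3]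
  constructor
  · -- minimal surface equation for u
    have havg : py (px u) p = ((py (py v) p * omegT v p ^ 2
        + py v p * (px v p * py (px v) p + py v p * py (py v) p)) / omegT v p ^ 3 - τ
        + (-((px (px v) p * omegT v p ^ 2
        + px v p * (px v p * px (px v) p + py v p * px (py v) p)) / omegT v p ^ 3) + τ)) / 2 := by
      rw [hxy]
      linarith [hsymu]
    rw [htwinx p hp, htwiny p hp, hxx, havg, hyy, hsymv]
    clear hsymu key hxx hxy hyx hyy havg hfeE hfeF hE hE' hF hF' hW hWinv hg heqE heqF hW2
    set P := px v p with hP1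
    set Q := py v p with hQ1
    set A := px (px v) p with hA1
    set C := px (py v) p with hC1
    set D := py (py v) p with hD1
    set W := omegT v p with hW1
    field_simp
    ring
  · -- CMC equation for v
    rw [hsymv]
    rw [hsymv] at key
    linear_combination key - (px (px v) p + py (py v) p) * hW2
end

section
/- Let τ ∈ ℝ, let Ω ⊆ ℝ² be open, and let v : Ω → ℝ be a C² function with v_x² + v_y² < 1 on Ω; set ω̃ = (1 − v_x² − v_y²)^(1/2). Then at every point of Ω the cross-partial identity ∂_y(v_y/ω̃ − τy) = ∂_x(−v_x/ω̃ + τx) holds if and only if the spacelike constant-mean-curvature-τ equation (1−v_y²)v_xx + 2 v_x v_y v_xy + (1−v_x²)v_yy = 2τ ω̃³ holds at that point. (Hence on a simply connected domain, this PDE for v is exactly the integrability condition for the existence of a dual function u with u_x = v_y/ω̃ − τy and u_y = −v_x/ω̃ + τx.) -/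
set_option maxHeartbeats 1000000 in
/-- for a spacelike `C²` function `v`, the cross-partial identity
`∂_y(v_y/ω̃ − τy) = ∂_x(−v_x/ω̃ + τx)` holds at a point of `Ω` iff the spacelike
CMC-`τ` equation holds there; i.e. the CMC-`τ` equation is the integrability
condition for the twin relations. -/
theorem cmc_eq_is_integrability_condition (τ : ℝ) (Ω : Set (ℝ × ℝ)) (hΩ : IsOpen Ω)
    (v : ℝ × ℝ → ℝ) (hv : ContDiffOn ℝ 2 v Ω)
    (hsp : ∀ p ∈ Ω, (px v p) ^ 2 + (py v p) ^ 2 < 1) :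
    ∀ p ∈ Ω,
      (py (fun q => py v q / omegT v q - τ * q.2) p
          = px (fun q => -px v q / omegT v q + τ * q.1) p) ↔
      ((1 - (py v p) ^ 2) * px (px v) p
          + 2 * px v p * py v p * py (px v) p
          + (1 - (px v p) ^ 2) * py (py v) p = 2 * τ * (omegT v p) ^ 3) := by
  intro p hp
  have hv2 : ContDiffAt ℝ 2 v p := hv.contDiffAt (hΩ.mem_nhds hp)
  set F : ℝ × ℝ → (ℝ × ℝ →L[ℝ] ℝ) := fderiv ℝ v with hFdef
  have hF1 : ContDiffAt ℝ 1 F p := hv2.fderiv_right (by norm_num)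
  set H := fderiv ℝ F p with hHdef
  have hHF : HasFDerivAt F H p := (hF1.differentiableAt one_ne_zero).hasFDerivAt
  have hsym : ∀ w u : ℝ × ℝ, H w u = H u w := by
    intro w u
    exact hv2.isSymmSndFDerivAt (by simp) w u
  -- partial derivative functions
  have hx : HasFDerivAt (fun q => F q (1, 0))
      ((F p).comp (0 : (ℝ × ℝ) →L[ℝ] (ℝ × ℝ)) + H.flip ((1 : ℝ), (0 : ℝ))) p :=
    hHF.clm_apply (hasFDerivAt_const _ _)
  have hy : HasFDerivAt (fun q => F q (0, 1))
      ((F p).comp (0 : (ℝ × ℝ) →L[ℝ] (ℝ × ℝ)) + H.flip ((0 : ℝ), (1 : ℝ))) p :=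
    hHF.clm_apply (hasFDerivAt_const _ _)
  set Dx := (F p).comp (0 : (ℝ × ℝ) →L[ℝ] (ℝ × ℝ)) + H.flip ((1 : ℝ), (0 : ℝ)) with hDx
  set Dy := (F p).comp (0 : (ℝ × ℝ) →L[ℝ] (ℝ × ℝ)) + H.flip ((0 : ℝ), (1 : ℝ)) with hDy
  have hDxap : ∀ w, Dx w = H w (1, 0) := by intro w; simp [hDx]
  have hDyap : ∀ w, Dy w = H w (0, 1) := by intro w; simp [hDy]
  -- abbreviations
  set a := F p (1, 0) with ha
  set b := F p (0, 1) with hb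
  have hpxv : ∀ q, px v q = F q (1, 0) := fun q => rfl
  have hpyv : ∀ q, py v q = F q (0, 1) := fun q => rfl
  -- the inner function of omegT
  set g : ℝ × ℝ → ℝ := fun q => 1 - F q (1, 0) ^ 2 - F q (0, 1) ^ 2 with hgdef
  have hsp' : a ^ 2 + b ^ 2 < 1 := hsp p hp
  have hgp : 0 < g p := by
    have : g p = 1 - a ^ 2 - b ^ 2 := rfl
    rw [this]; linarith
  have hg : HasFDerivAt g ((0 - (a • Dx + a • Dx)) - (b • Dy + b • Dy)) p := by
    simp only [hgdef, pow_two]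
    exact ((hasFDerivAt_const (1:ℝ) p).sub (hx.mul hx)).sub (hy.mul hy)
  set G := (0 - (a • Dx + a • Dx)) - (b • Dy + b • Dy) with hGdef
  -- omegT
  have homeg : ∀ q, omegT v q = Real.sqrt (g q) := fun q => rfl
  set ω := omegT v p with hω
  have hωg : ω = Real.sqrt (g p) := rfl
  have hωpos : 0 < ω := by rw [hωg]; exact Real.sqrt_pos.2 hgp
  have hω2 : ω ^ 2 = 1 - a ^ 2 - b ^ 2 := by
    rw [hωg, Real.sq_sqrt hgp.le]
  have hωf : HasFDerivAt (omegT v) ((1 / (2 * ω)) • G) p := by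
    have := hg.sqrt (ne_of_gt hgp)
    rw [hωg]
    exact this
  have hinv : HasFDerivAt (fun q => (omegT v q)⁻¹) ((-(ω ^ 2)⁻¹) • ((1 / (2 * ω)) • G)) p :=
    (hasDerivAt_inv (ne_of_gt hωpos)).comp_hasFDerivAt p hωf
  -- first function
  have h1 : HasFDerivAt (fun q => py v q / omegT v q - τ * q.2)
      ((b • ((-(ω ^ 2)⁻¹) • ((1 / (2 * ω)) • G)) + ω⁻¹ • Dy)
        - τ • (ContinuousLinearMap.snd ℝ ℝ ℝ)) p := by
    have hq := hy.mul hinv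
    have h2 : HasFDerivAt (fun q : ℝ × ℝ => τ * q.2) (τ • (ContinuousLinearMap.snd ℝ ℝ ℝ)) p :=
      (ContinuousLinearMap.snd ℝ ℝ ℝ).hasFDerivAt.const_mul τ
    have := hq.sub h2
    simp only [div_eq_mul_inv, hpyv]
    exact this
  have h2 : HasFDerivAt (fun q => -px v q / omegT v q + τ * q.1)
      (((-a) • ((-(ω ^ 2)⁻¹) • ((1 / (2 * ω)) • G)) + ω⁻¹ • (-Dx))
        + τ • (ContinuousLinearMap.fst ℝ ℝ ℝ)) p := by
    have hq := hx.neg.mul hinv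
    have h2' : HasFDerivAt (fun q : ℝ × ℝ => τ * q.1) (τ • (ContinuousLinearMap.fst ℝ ℝ ℝ)) p :=
      (ContinuousLinearMap.fst ℝ ℝ ℝ).hasFDerivAt.const_mul τ
    have := hq.add h2'
    simp only [neg_mul] at this
    simp only [div_eq_mul_inv, hpxv, neg_div, neg_mul]
    exact this
  -- second-derivative abbreviations
  set A := H (1, 0) (1, 0) with hA
  set Bm := H (1, 0) (0, 1) with hB
  set C := H (0, 1) (0, 1) with hC
  have hBB : H ((0:ℝ), (1:ℝ)) ((1:ℝ), (0:ℝ)) = Bm := hsym (0, 1) (1, 0)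
  have hca : px v p = a := rfl
  have hcb : py v p = b := rfl
  have hx' : HasFDerivAt (px v) Dx p := hx
  have hy' : HasFDerivAt (py v) Dy p := hy
  have g1 : px (px v) p = A := by
    show fderiv ℝ (px v) p (1, 0) = A
    rw [hx'.fderiv, hDxap]
  have g2 : py (px v) p = Bm := by
    show fderiv ℝ (px v) p (0, 1) = Bm
    rw [hx'.fderiv, hDxap, hBB]
  have g3 : py (py v) p = C := by
    show fderiv ℝ (py v) p (0, 1) = C
    rw [hy'.fderiv, hDyap]
  have hne : ω ≠ 0 := hωpos.ne'
  -- evaluate the two cross partials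
  have e1 : py (fun q => py v q / omegT v q - τ * q.2) p
      = (a * b * Bm + b ^ 2 * C + ω ^ 2 * C) / ω ^ 3 - τ := by
    show fderiv ℝ (fun q => py v q / omegT v q - τ * q.2) p (0, 1) = _
    rw [h1.fderiv]
    simp [hGdef, hDxap, hDyap, hBB]
    field_simp
    ring
  have e2 : px (fun q => -px v q / omegT v q + τ * q.1) p
      = -((a ^ 2 * A + a * b * Bm + ω ^ 2 * A) / ω ^ 3) + τ := by
    show fderiv ℝ (fun q => -px v q / omegT v q + τ * q.1) p (1, 0) = _
    rw [h2.fderiv]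
    simp [hGdef, hDxap, hDyap, hBB]
    field_simp
    ring
  rw [e1, e2, hca, hcb, g1, g2, g3]
  constructor
  · intro h
    have h' : a * b * Bm + b ^ 2 * C + ω ^ 2 * C + (a ^ 2 * A + a * b * Bm + ω ^ 2 * A)
        = 2 * τ * ω ^ 3 := by
      field_simp at h
      linarith
    linear_combination h' - (A + C) * hω2
  · intro h
    have h' : a * b * Bm + b ^ 2 * C + ω ^ 2 * C + (a ^ 2 * A + a * b * Bm + ω ^ 2 * A)
        = 2 * τ * ω ^ 3 := by
      linear_combination h + (A + C) * hω2
    field_simp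
    linarith
end

section
/- Let τ ∈ ℝ, let Ω ⊆ ℝ² be open, and let u : Ω → ℝ be a C² function; set α = u_x + τy, β = u_y − τx and ω = (1 + α² + β²)^(1/2). Then at every point of Ω the cross-partial identity ∂_y((−u_y + τx)/ω) = ∂_x((u_x + τy)/ω) holds if and only if the minimal surface equation (1+β²)u_xx − 2αβ u_xy + (1+α²)u_yy = 0 holds at that point. (Hence on a simply connected domain, the minimal surface equation for u is exactly the integrability condition for the existence of a dual function v with v_x = (−u_y + τx)/ω and v_y = (u_x + τy)/ω.) -/
/-- `α = u_x + τ y`. -/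
noncomputable def alph (τ : ℝ) (u : ℝ × ℝ → ℝ) (p : ℝ × ℝ) : ℝ := px u p + τ * p.2

/-- `β = u_y − τ x`. -/
noncomputable def bet (τ : ℝ) (u : ℝ × ℝ → ℝ) (p : ℝ × ℝ) : ℝ := py u p - τ * p.1

/-- Riemannian area element `ω = (1 + α² + β²)^(1/2)` of the graph of `u`. -/
noncomputable def omeg (τ : ℝ) (u : ℝ × ℝ → ℝ) (p : ℝ × ℝ) : ℝ :=
  Real.sqrt (1 + (alph τ u p) ^ 2 + (bet τ u p) ^ 2)

/-- for a `C²` function `u`, the cross-partial identity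
`∂_y((−u_y + τx)/ω) = ∂_x((u_x + τy)/ω)` holds at a point of `Ω` iff the minimal
surface equation in `Nil₃(τ)` holds there; i.e. the minimal surface equation is
the integrability condition for the twin relations. -/
theorem minimal_eq_is_integrability_condition (τ : ℝ) (Ω : Set (ℝ × ℝ)) (hΩ : IsOpen Ω)
    (u : ℝ × ℝ → ℝ) (hu : ContDiffOn ℝ 2 u Ω) :
    ∀ p ∈ Ω,
      (py (fun q => (-py u q + τ * q.1) / omeg τ u q) p
          = px (fun q => (px u q + τ * q.2) / omeg τ u q) p) ↔
      ((1 + (bet τ u p) ^ 2) * px (px u) p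
          - 2 * alph τ u p * bet τ u p * py (px u) p
          + (1 + (alph τ u p) ^ 2) * py (py u) p = 0) := by
  intro p hp
  have hmem := hΩ.mem_nhds hp
  have hp2 : ContDiffAt ℝ 2 u p := hu.contDiffAt hmem
  have hD : ContDiffAt ℝ 1 (fderiv ℝ u) p := hp2.fderiv_right (by norm_num)
  have hD2 : HasFDerivAt (fderiv ℝ u) (fderiv ℝ (fderiv ℝ u) p) p :=
    (hD.differentiableAt one_ne_zero).hasFDerivAt
  set f2 := fderiv ℝ (fderiv ℝ u) p with hf2def
  have hsymm : f2 (0,1) (1,0) = f2 (1,0) (0,1) :=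
    hp2.isSymmSndFDerivAt (by norm_num) (0,1) (1,0)
  have hpxu : HasFDerivAt (px u) ((fderiv ℝ u p).comp (0 : (ℝ×ℝ) →L[ℝ] (ℝ×ℝ)) + f2.flip (1,0)) p :=
    hD2.clm_apply (hasFDerivAt_const ((1:ℝ),(0:ℝ)) p)
  have hpyu : HasFDerivAt (py u) ((fderiv ℝ u p).comp (0 : (ℝ×ℝ) →L[ℝ] (ℝ×ℝ)) + f2.flip (0,1)) p :=
    hD2.clm_apply (hasFDerivAt_const ((0:ℝ),(1:ℝ)) p)
  have hxx : px (px u) p = f2 (1,0) (1,0) := by rw [px, hpxu.fderiv]; simp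
  have hxy : py (px u) p = f2 (0,1) (1,0) := by rw [py, hpxu.fderiv]; simp
  have hyy : py (py u) p = f2 (0,1) (0,1) := by rw [py, hpyu.fderiv]; simp
  -- derivative of alph
  obtain ⟨dA, hA, hdA1, hdA2⟩ :
      ∃ d : (ℝ×ℝ) →L[ℝ] ℝ, HasFDerivAt (alph τ u) d p ∧
        d (1,0) = f2 (1,0) (1,0) ∧ d (0,1) = f2 (0,1) (1,0) + τ := by
    refine ⟨_, hpxu.add ((hasFDerivAt_snd (𝕜 := ℝ)).const_mul τ), ?_, ?_⟩ <;> simp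
  -- derivative of bet
  obtain ⟨dB, hB, hdB1, hdB2⟩ :
      ∃ d : (ℝ×ℝ) →L[ℝ] ℝ, HasFDerivAt (bet τ u) d p ∧
        d (1,0) = f2 (1,0) (0,1) - τ ∧ d (0,1) = f2 (0,1) (0,1) := by
    refine ⟨_, hpyu.sub ((hasFDerivAt_fst (𝕜 := ℝ)).const_mul τ), ?_, ?_⟩ <;> simp
  have hspos : (0:ℝ) < 1 + (alph τ u p) ^ 2 + (bet τ u p) ^ 2 := by positivity
  have hWpos : 0 < omeg τ u p := Real.sqrt_pos.2 hspos
  have hW0 : omeg τ u p ≠ 0 := ne_of_gt hWpos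
  have hW2 : (omeg τ u p) ^ 2 = 1 + (alph τ u p) ^ 2 + (bet τ u p) ^ 2 := Real.sq_sqrt hspos.le
  -- derivative of s = 1 + alph^2 + bet^2
  obtain ⟨dS, hS, hdS⟩ :
      ∃ d : (ℝ×ℝ) →L[ℝ] ℝ, HasFDerivAt (fun q => 1 + (alph τ u q) ^ 2 + (bet τ u q) ^ 2) d p ∧
        ∀ v, d v = 2 * alph τ u p * dA v + 2 * bet τ u p * dB v := by
    have h1 : HasFDerivAt (fun q => (alph τ u q) ^ 2)
        (alph τ u p • dA + alph τ u p • dA) p := by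
      simp only [pow_two]; exact hA.mul hA
    have h2 : HasFDerivAt (fun q => (bet τ u q) ^ 2)
        (bet τ u p • dB + bet τ u p • dB) p := by
      simp only [pow_two]; exact hB.mul hB
    refine ⟨_, (h1.const_add 1).add h2, fun v => ?_⟩
    simp; ring
  -- derivative of omeg
  obtain ⟨dW, hW, hdW⟩ :
      ∃ d : (ℝ×ℝ) →L[ℝ] ℝ, HasFDerivAt (omeg τ u) d p ∧
        ∀ v, d v = (1 / (2 * omeg τ u p)) * dS v := by
    refine ⟨_, (Real.hasDerivAt_sqrt (ne_of_gt hspos)).comp_hasFDerivAt p hS, fun v => ?_⟩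
    simp [omeg]
  -- derivative of 1/omeg
  obtain ⟨dWi, hWi, hdWi⟩ :
      ∃ d : (ℝ×ℝ) →L[ℝ] ℝ, HasFDerivAt (fun q => (omeg τ u q)⁻¹) d p ∧
        ∀ v, d v = -((omeg τ u p) ^ 2)⁻¹ * dW v := by
    refine ⟨_, (hasDerivAt_inv hW0).comp_hasFDerivAt p hW, fun v => ?_⟩
    simp
  -- value of py of the first quotient
  have hval1 : py (fun q => (-py u q + τ * q.1) / omeg τ u q) p
      = (-(bet τ u p)) * dWi (0,1) + (omeg τ u p)⁻¹ * (-(f2 (0,1) (0,1))) := by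
    have hN : HasFDerivAt (fun q => -py u q + τ * q.1)
        (-((fderiv ℝ u p).comp (0 : (ℝ×ℝ) →L[ℝ] (ℝ×ℝ)) + f2.flip (0,1))
          + τ • ContinuousLinearMap.fst ℝ ℝ ℝ) p :=
      hpyu.neg.add ((hasFDerivAt_fst (𝕜 := ℝ)).const_mul τ)
    have hF : HasFDerivAt (fun q => (-py u q + τ * q.1) / omeg τ u q)
        ((-py u p + τ * p.1) • dWi + (omeg τ u p)⁻¹ •
          (-((fderiv ℝ u p).comp (0 : (ℝ×ℝ) →L[ℝ] (ℝ×ℝ)) + f2.flip (0,1))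
            + τ • ContinuousLinearMap.fst ℝ ℝ ℝ)) p := by
      simp only [div_eq_mul_inv]; exact hN.mul hWi
    rw [py, hF.fderiv]
    simp only [ContinuousLinearMap.add_apply, ContinuousLinearMap.coe_smul', Pi.smul_apply,
      smul_eq_mul, ContinuousLinearMap.neg_apply, ContinuousLinearMap.comp_apply,
      ContinuousLinearMap.zero_apply, map_zero, ContinuousLinearMap.flip_apply,
      ContinuousLinearMap.coe_fst', ContinuousLinearMap.coe_snd', bet, py]
    ring
  -- value of px of the second quotient
  have hval2 : px (fun q => (px u q + τ * q.2) / omeg τ u q) p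
      = (alph τ u p) * dWi (1,0) + (omeg τ u p)⁻¹ * (f2 (1,0) (1,0)) := by
    have hF : HasFDerivAt (fun q => (px u q + τ * q.2) / omeg τ u q)
        ((px u p + τ * p.2) • dWi + (omeg τ u p)⁻¹ •
          ((fderiv ℝ u p).comp (0 : (ℝ×ℝ) →L[ℝ] (ℝ×ℝ)) + f2.flip (1,0)
            + τ • ContinuousLinearMap.snd ℝ ℝ ℝ)) p := by
      simp only [div_eq_mul_inv]
      exact (hpxu.add ((hasFDerivAt_snd (𝕜 := ℝ)).const_mul τ)).mul hWi
    rw [px, hF.fderiv]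
    simp only [ContinuousLinearMap.add_apply, ContinuousLinearMap.coe_smul', Pi.smul_apply,
      smul_eq_mul, ContinuousLinearMap.neg_apply, ContinuousLinearMap.comp_apply,
      ContinuousLinearMap.zero_apply, map_zero, ContinuousLinearMap.flip_apply,
      ContinuousLinearMap.coe_fst', ContinuousLinearMap.coe_snd', alph, px]
    ring
  rw [hval1, hval2, hxx, hxy, hyy]
  rw [hdWi (0,1), hdWi (1,0), hdW (0,1), hdW (1,0), hdS (0,1), hdS (1,0),
    hdA1, hdA2, hdB1, hdB2, hsymm]
  set A := alph τ u p
  set B := bet τ u p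
  set W := omeg τ u p
  set X := f2 (1,0) (1,0)
  set Y := f2 (1,0) (0,1)
  set Z := f2 (0,1) (0,1)
  have key : -B * (-(W ^ 2)⁻¹ * (1 / (2 * W) * (2 * A * (Y + τ) + 2 * B * Z))) + W⁻¹ * (-Z)
      - (A * (-(W ^ 2)⁻¹ * (1 / (2 * W) * (2 * A * X + 2 * B * (Y - τ)))) + W⁻¹ * X)
      = -(((1 + B ^ 2) * X - 2 * A * B * Y + (1 + A ^ 2) * Z)) / W ^ 3 := by
    field_simp
    linear_combination (-(X + Z)) * hW2
  rw [← sub_eq_zero, key, div_eq_zero_iff, neg_eq_zero]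
  have h3 : W ^ 3 ≠ 0 := pow_ne_zero 3 hW0
  tauto
end

section
/- Let τ ∈ ℝ, let Ω ⊆ ℝ² be open, and let u, v : Ω → ℝ be C² functions with v_x² + v_y² < 1 satisfying the twin relations u_x = v_y/ω̃ − τy and u_y = −v_x/ω̃ + τx on Ω, where ω̃ = (1 − v_x² − v_y²)^(1/2). Set α = u_x + τy, β = u_y − τx, ω = (1 + α² + β²)^(1/2). Then at every point of Ω the complex numbers Q₁₁ = 2u_xx/ω + (2i/ω²)(αβ u_xx − (1+α²) u_xy) and Q̃₁₁ = (2/ω̃²)(v_x v_y v_xx + (1−v_x²) v_xy) + (2i/ω̃) v_xx − 2iτ(1−v_x²) are equal. -/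
set_option maxHeartbeats 1000000


/-- `(e₁,e₁)`-component of the Abresch–Rosenberg differential of the minimal
graph of `u` in `Nil₃(τ)`:
`Q₁₁ = 2u_xx/ω + (2i/ω²)(αβ u_xx − (1+α²) u_xy)`. -/
noncomputable def Q11 (τ : ℝ) (u : ℝ × ℝ → ℝ) (p : ℝ × ℝ) : ℂ :=
  (2 * px (px u) p / omeg τ u p : ℝ) +
    Complex.I * ((2 / (omeg τ u p) ^ 2) *
      (alph τ u p * bet τ u p * px (px u) p - (1 + (alph τ u p) ^ 2) * py (px u) p) : ℝ)

/-- `(ẽ₁,ẽ₁)`-component of the Hopf differential of the spacelike CMC-`τ`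
graph of `v` in `𝕃³`:
`Q̃₁₁ = (2/ω̃²)(v_x v_y v_xx + (1−v_x²) v_xy) + (2i/ω̃) v_xx − 2iτ(1−v_x²)`. -/
noncomputable def QT11 (τ : ℝ) (v : ℝ × ℝ → ℝ) (p : ℝ × ℝ) : ℂ :=
  ((2 / (omegT v p) ^ 2) *
      (px v p * py v p * px (px v) p + (1 - (px v p) ^ 2) * py (px v) p) : ℝ) +
    Complex.I * ((2 / omegT v p) * px (px v) p - 2 * τ * (1 - (px v p) ^ 2) : ℝ)

lemma px_py_comm {f : ℝ × ℝ → ℝ} {p : ℝ × ℝ} (hf : ContDiffAt ℝ 2 f p) :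
    px (py f) p = py (px f) p := by
  have hsym : IsSymmSndFDerivAt ℝ f p := hf.isSymmSndFDerivAt (by norm_num)
  have hd : DifferentiableAt ℝ (fderiv ℝ f) p :=
    (hf.fderiv_right (m := 1) (by norm_num)).differentiableAt one_ne_zero
  have h1 : px (py f) p = fderiv ℝ (fderiv ℝ f) p (1, 0) (0, 1) := by
    show fderiv ℝ (fun q => fderiv ℝ f q (0, 1)) p (1, 0) = _
    rw [fderiv_clm_apply hd (differentiableAt_const _)]
    simp
  have h2 : py (px f) p = fderiv ℝ (fderiv ℝ f) p (0, 1) (1, 0) := by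
    show fderiv ℝ (fun q => fderiv ℝ f q (1, 0)) p (0, 1) = _
    rw [fderiv_clm_apply hd (differentiableAt_const _)]
    simp
  rw [h1, h2, hsym.eq]

/-- under the twin relations, the `(e₁,e₁)`-component of the
Abresch–Rosenberg differential of the minimal graph of `u` in `Nil₃(τ)` equals
the `(ẽ₁,ẽ₁)`-component of the Hopf differential of the dual spacelike CMC-`τ`
graph of `v` in `𝕃³`. -/
theorem abresch_rosenberg_eq_dual_hopf (τ : ℝ) (Ω : Set (ℝ × ℝ)) (hΩ : IsOpen Ω)
    (u v : ℝ × ℝ → ℝ)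
    (hu : ContDiffOn ℝ 2 u Ω) (hv : ContDiffOn ℝ 2 v Ω)
    (hsp : ∀ p ∈ Ω, (px v p) ^ 2 + (py v p) ^ 2 < 1)
    (htwinx : ∀ p ∈ Ω, px u p = py v p / omegT v p - τ * p.2)
    (htwiny : ∀ p ∈ Ω, py u p = -px v p / omegT v p + τ * p.1) :
    ∀ p ∈ Ω, Q11 τ u p = QT11 τ v p := by
  intro p hp
  have hmem : Ω ∈ nhds p := hΩ.mem_nhds hp
  have hup : ContDiffAt ℝ 2 u p := (hu p hp).contDiffAt hmem
  have hvp : ContDiffAt ℝ 2 v p := (hv p hp).contDiffAt hmem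
  have hs : (0:ℝ) < 1 - px v p ^ 2 - py v p ^ 2 := by have := hsp p hp; linarith
  have hw : (0:ℝ) < omegT v p := Real.sqrt_pos.mpr hs
  have hwne : omegT v p ≠ 0 := ne_of_gt hw
  have hw2 : omegT v p ^ 2 = 1 - px v p ^ 2 - py v p ^ 2 := Real.sq_sqrt hs.le
  have hc1 : ContDiffAt ℝ 1 (fderiv ℝ v) p := hvp.fderiv_right (m := 1) (by norm_num)
  have hdvx : DifferentiableAt ℝ (px v) p :=
    (hc1.clm_apply contDiffAt_const).differentiableAt one_ne_zero
  have hdvy : DifferentiableAt ℝ (py v) p :=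
    (hc1.clm_apply contDiffAt_const).differentiableAt one_ne_zero
  have hA : HasFDerivAt (px v) (fderiv ℝ (px v) p) p := hdvx.hasFDerivAt
  have hB : HasFDerivAt (py v) (fderiv ℝ (py v) p) p := hdvy.hasFDerivAt
  have hg : HasFDerivAt (fun q => 1 - px v q * px v q - py v q * py v q)
      ((0 - (px v p • fderiv ℝ (px v) p + px v p • fderiv ℝ (px v) p))
        - (py v p • fderiv ℝ (py v) p + py v p • fderiv ℝ (py v) p)) p :=
    ((hasFDerivAt_const (1:ℝ) p).sub (hA.mul hA)).sub (hB.mul hB)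
  have hsq : HasFDerivAt (fun q => Real.sqrt (1 - px v q * px v q - py v q * py v q))
      ((1 / (2 * Real.sqrt (1 - px v p * px v p - py v p * py v p))) •
        ((0 - (px v p • fderiv ℝ (px v) p + px v p • fderiv ℝ (px v) p))
          - (py v p • fderiv ℝ (py v) p + py v p • fderiv ℝ (py v) p))) p :=
    hg.sqrt (by nlinarith)
  have hroot : Real.sqrt (1 - px v p * px v p - py v p * py v p) = omegT v p := by
    rw [omegT]; congr 1; ring
  have hW : HasFDerivAt (omegT v)
      ((1 / (2 * Real.sqrt (1 - px v p * px v p - py v p * py v p))) •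
        ((0 - (px v p • fderiv ℝ (px v) p + px v p • fderiv ℝ (px v) p))
          - (py v p • fderiv ℝ (py v) p + py v p • fderiv ℝ (py v) p))) p := by
    apply hsq.congr_of_eventuallyEq
    filter_upwards with q
    simp [omegT, pow_two]
  have hWinv : HasFDerivAt (fun q => (omegT v q)⁻¹)
      ((-(omegT v p ^ 2)⁻¹) • ((1 / (2 * Real.sqrt (1 - px v p * px v p - py v p * py v p))) •
        ((0 - (px v p • fderiv ℝ (px v) p + px v p • fderiv ℝ (px v) p))
          - (py v p • fderiv ℝ (py v) p + py v p • fderiv ℝ (py v) p)))) p :=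
    (hasDerivAt_inv hwne).comp_hasFDerivAt p hW
  -- derivative of px u
  have hτ2 : HasFDerivAt (fun q : ℝ × ℝ => τ * q.2)
      (τ • ContinuousLinearMap.snd ℝ ℝ ℝ) p := (hasFDerivAt_snd).const_mul τ
  have hF := (hB.mul hWinv).sub hτ2
  have heqx : px u =ᶠ[nhds p] fun q => py v q * (omegT v q)⁻¹ - τ * q.2 := by
    filter_upwards [hmem] with q hq
    rw [htwinx q hq, div_eq_mul_inv]
  have hpxu := hF.congr_of_eventuallyEq heqx
  have e1 : px (px u) p = fderiv ℝ (px u) p (1, 0) := rfl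
  rw [hpxu.fderiv] at e1
  simp only [hroot] at e1
  simp at e1
  -- derivative of py u
  have hτ1 : HasFDerivAt (fun q : ℝ × ℝ => τ * q.1)
      (τ • ContinuousLinearMap.fst ℝ ℝ ℝ) p := (hasFDerivAt_fst).const_mul τ
  have hG := ((hA.neg).mul hWinv).add hτ1
  have heqy : py u =ᶠ[nhds p] fun q => -px v q * (omegT v q)⁻¹ + τ * q.1 := by
    filter_upwards [hmem] with q hq
    rw [htwiny q hq, neg_div, div_eq_mul_inv, neg_mul]
  have hpyu := hG.congr_of_eventuallyEq heqy
  have e2 : px (py u) p = fderiv ℝ (py u) p (1, 0) := rfl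
  rw [hpyu.fderiv] at e2
  simp only [hroot] at e2
  simp at e2
  -- Schwarz symmetry
  have hsymu : py (px u) p = px (py u) p := (px_py_comm hup).symm
  have hsymv : py (px v) p = px (py v) p := (px_py_comm hvp).symm
  -- clean forms
  have hax : (fderiv ℝ (px v) p) (1, 0) = px (px v) p := rfl
  have hbx : (fderiv ℝ (py v) p) (1, 0) = px (py v) p := rfl
  rw [hax, hbx] at e1 e2
  -- geometric quantities
  have halph : alph τ u p = py v p / omegT v p := by rw [alph, htwinx p hp]; ring
  have hbet : bet τ u p = -px v p / omegT v p := by rw [bet, htwiny p hp]; ring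
  have homeg : omeg τ u p = 1 / omegT v p := by
    rw [omeg, halph, hbet]
    rw [show 1 + (py v p / omegT v p) ^ 2 + (-px v p / omegT v p) ^ 2
        = (1 / omegT v p) ^ 2 by field_simp; linear_combination hw2]
    exact Real.sqrt_sq (by positivity)
  -- final computation
  rw [Q11, QT11, hsymu, e1, e2, hsymv, halph, hbet, homeg]
  rw [Complex.ext_iff]
  constructor
  · simp only [Complex.add_re, Complex.ofReal_re, Complex.mul_re, Complex.I_re, Complex.I_im,
      Complex.ofReal_im]
    field_simp
    ring_nf
    linear_combination (2 * px (py v) p * omegT v p) * hw2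
  · simp only [Complex.add_im, Complex.ofReal_im, Complex.mul_im, Complex.I_re, Complex.I_im,
      Complex.ofReal_re]
    field_simp
    ring_nf
    linear_combination (2 * px (px v) p * omegT v p ^ 2 - 2 * τ * omegT v p ^ 3) * hw2
end

section
/- Let τ ∈ ℝ, let Ω ⊆ ℝ² be open, and let u, v : Ω → ℝ be C² functions with v_x² + v_y² < 1 satisfying the twin relations u_x = v_y/ω̃ − τy and u_y = −v_x/ω̃ + τx on Ω, where ω̃ = (1 − v_x² − v_y²)^(1/2). Then on Ω: u_xy² − u_xx u_yy = (v_xy² − v_xx v_yy)/(1 − v_x² − v_y²)² + τ². -/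
lemma key_div (A B N : ℝ × ℝ → ℝ) (A' B' N' : ℝ × ℝ →L[ℝ] ℝ) (p : ℝ × ℝ)
    (hA : HasFDerivAt A A' p) (hB : HasFDerivAt B B' p) (hN : HasFDerivAt N N' p)
    (h : A p ^ 2 + B p ^ 2 < 1) :
    HasFDerivAt (fun q => N q / Real.sqrt (1 - A q ^ 2 - B q ^ 2))
      ((1 / Real.sqrt (1 - A p ^ 2 - B p ^ 2)) • N'
        + (N p * A p / (Real.sqrt (1 - A p ^ 2 - B p ^ 2)) ^ 3) • A'
        + (N p * B p / (Real.sqrt (1 - A p ^ 2 - B p ^ 2)) ^ 3) • B') p := by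
  set w := Real.sqrt (1 - A p ^ 2 - B p ^ 2) with hwdef
  have hpos : 0 < 1 - A p ^ 2 - B p ^ 2 := by nlinarith
  have hw : 0 < w := Real.sqrt_pos.mpr hpos
  have hw2 : w ^ 2 = 1 - A p ^ 2 - B p ^ 2 := Real.sq_sqrt hpos.le
  have hA2 : HasFDerivAt (fun q => A q ^ 2) ((A p) • A' + (A p) • A') p := by
    simpa only [pow_two, Pi.mul_def] using hA.mul hA
  have hB2 : HasFDerivAt (fun q => B q ^ 2) ((B p) • B' + (B p) • B') p := by
    simpa only [pow_two, Pi.mul_def] using hB.mul hB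
  have h1 : HasFDerivAt (fun q => 1 - A q ^ 2 - B q ^ 2)
      ((0 : ℝ × ℝ →L[ℝ] ℝ) - ((A p) • A' + (A p) • A') - ((B p) • B' + (B p) • B')) p :=
    ((hasFDerivAt_const (1:ℝ) p).sub hA2).sub hB2
  have hsqrt : HasFDerivAt (fun q => Real.sqrt (1 - A q ^ 2 - B q ^ 2))
      ((1 / (2 * w)) • ((0 : ℝ × ℝ →L[ℝ] ℝ) - ((A p) • A' + (A p) • A')
        - ((B p) • B' + (B p) • B'))) p :=
    h1.sqrt hpos.ne'
  have hinv : HasFDerivAt (fun q => (Real.sqrt (1 - A q ^ 2 - B q ^ 2))⁻¹)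
      ((-(w ^ 2)⁻¹) • ((1 / (2 * w)) • ((0 : ℝ × ℝ →L[ℝ] ℝ) - ((A p) • A' + (A p) • A')
        - ((B p) • B' + (B p) • B')))) p :=
    (hasDerivAt_inv hw.ne').comp_hasFDerivAt p hsqrt
  have H := hN.mul hinv
  have hfun : (fun q => N q / Real.sqrt (1 - A q ^ 2 - B q ^ 2))
      = fun q => N q * (Real.sqrt (1 - A q ^ 2 - B q ^ 2))⁻¹ := by
    funext q; rw [div_eq_mul_inv]
  rw [hfun]
  refine H.congr_fderiv ?_
  refine ContinuousLinearMap.ext fun z => ?_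
  simp only [ContinuousLinearMap.add_apply, ContinuousLinearMap.smul_apply,
    ContinuousLinearMap.sub_apply, ContinuousLinearMap.zero_apply, smul_eq_mul]
  field_simp
  ring

lemma hasFDerivAt_pv (f : ℝ × ℝ → ℝ) (p : ℝ × ℝ) (hf : ContDiffAt ℝ 2 f p) (z : ℝ × ℝ) :
    HasFDerivAt (fun q => fderiv ℝ f q z)
      ((ContinuousLinearMap.apply ℝ ℝ z).comp (fderiv ℝ (fderiv ℝ f) p)) p := by
  have h1 : ContDiffAt ℝ 1 (fderiv ℝ f) p := hf.fderiv_right (by norm_num)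
  have h2 : HasFDerivAt (fderiv ℝ f) (fderiv ℝ (fderiv ℝ f) p) p :=
    (h1.differentiableAt one_ne_zero).hasFDerivAt
  exact ((ContinuousLinearMap.apply ℝ ℝ z).hasFDerivAt).comp p h2

lemma pxpx (f : ℝ × ℝ → ℝ) (p : ℝ × ℝ) (hf : ContDiffAt ℝ 2 f p) (z w : ℝ × ℝ) :
    fderiv ℝ (fun q => fderiv ℝ f q z) p w = fderiv ℝ (fderiv ℝ f) p w z := by
  rw [(hasFDerivAt_pv f p hf z).fderiv]; rfl

lemma symm2 (f : ℝ × ℝ → ℝ) (p : ℝ × ℝ) (hf : ContDiffAt ℝ 2 f p) (z w : ℝ × ℝ) :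
    fderiv ℝ (fderiv ℝ f) p z w = fderiv ℝ (fderiv ℝ f) p w z :=
  (hf.isSymmSndFDerivAt (by norm_num)).eq z w

lemma alg (a b r s t τ w : ℝ) (hw : 0 < w) (hww : w ^ 2 = 1 - a ^ 2 - b ^ 2)
    (hE : ((1 - a ^ 2) * t + a * b * s) / w ^ 3 - τ
        = -(((1 - b ^ 2) * r + a * b * s) / w ^ 3) + τ) :
    (((1 - a ^ 2) * t + a * b * s) / w ^ 3 - τ) ^ 2
      - (((1 - a ^ 2) * s + a * b * r) / w ^ 3) * (-(((1 - b ^ 2) * s + a * b * t) / w ^ 3))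
    = (s ^ 2 - r * t) / (1 - a ^ 2 - b ^ 2) ^ 2 + τ ^ 2 := by
  have hw0 : w ≠ 0 := hw.ne'
  rw [← hww]
  field_simp at hE ⊢
  linear_combination (((1 - a ^ 2) * t + a * b * s)) * hE
    - ((s ^ 2 - r * t)) * hww

/-- under the twin relations, the Hessian determinants of dual
graphs satisfy `u_xy² − u_xx u_yy = (v_xy² − v_xx v_yy)/(1 − v_x² − v_y²)² + τ²`,
i.e. `−det(Hess u) = K̃ + τ²` where `K̃` is the Gauss curvature of the graph of `v`. -/
theorem hessian_determinants_of_dual_graphs (τ : ℝ) (Ω : Set (ℝ × ℝ)) (hΩ : IsOpen Ω)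
    (u v : ℝ × ℝ → ℝ)
    (hu : ContDiffOn ℝ 2 u Ω) (hv : ContDiffOn ℝ 2 v Ω)
    (hsp : ∀ p ∈ Ω, (px v p) ^ 2 + (py v p) ^ 2 < 1)
    (htwinx : ∀ p ∈ Ω, px u p = py v p / omegT v p - τ * p.2)
    (htwiny : ∀ p ∈ Ω, py u p = -px v p / omegT v p + τ * p.1) :
    ∀ p ∈ Ω,
      (py (px u) p) ^ 2 - px (px u) p * py (py u) p
        = ((py (px v) p) ^ 2 - px (px v) p * py (py v) p)
            / (1 - (px v p) ^ 2 - (py v p) ^ 2) ^ 2 + τ ^ 2 := by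
  intro p hp
  have hpΩ : Ω ∈ nhds p := hΩ.mem_nhds hp
  have hv2 : ContDiffAt ℝ 2 v p := hv.contDiffAt hpΩ
  have hu2 : ContDiffAt ℝ 2 u p := hu.contDiffAt hpΩ
  set a := px v p with ha
  set b := py v p with hb
  set w := Real.sqrt (1 - a ^ 2 - b ^ 2) with hwdef
  have hpos : 0 < 1 - a ^ 2 - b ^ 2 := by have := hsp p hp; nlinarith
  have hw : 0 < w := Real.sqrt_pos.mpr hpos
  have hw2 : w ^ 2 = 1 - a ^ 2 - b ^ 2 := Real.sq_sqrt hpos.le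
  set f'' := fderiv ℝ (fderiv ℝ v) p with hf''
  set A' := (ContinuousLinearMap.apply ℝ ℝ ((1:ℝ), (0:ℝ))).comp f'' with hA'
  set B' := (ContinuousLinearMap.apply ℝ ℝ ((0:ℝ), (1:ℝ))).comp f'' with hB'
  have hA : HasFDerivAt (px v) A' p := hasFDerivAt_pv v p hv2 (1, 0)
  have hB : HasFDerivAt (py v) B' p := hasFDerivAt_pv v p hv2 (0, 1)
  set r := f'' (1, 0) (1, 0) with hr
  set m := f'' (0, 1) (1, 0) with hm
  set t := f'' (0, 1) (0, 1) with ht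
  have hsymm : f'' (1, 0) (0, 1) = m := symm2 v p hv2 (1, 0) (0, 1)
  -- second partials of v
  have hvxx : px (px v) p = r := pxpx v p hv2 (1, 0) (1, 0)
  have hvxy : py (px v) p = m := pxpx v p hv2 (1, 0) (0, 1)
  have hvyx : px (py v) p = m := (pxpx v p hv2 (0, 1) (1, 0)).trans hsymm
  have hvyy : py (py v) p = t := pxpx v p hv2 (0, 1) (0, 1)
  have hww3 : 1 / w = (1 - a ^ 2 - b ^ 2) / w ^ 3 := by
    rw [← hw2]; rw [div_eq_div_iff (by positivity) (by positivity)]; ring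
  -- derivative of the x-twin relation
  have hD1 := key_div (px v) (py v) (py v) A' B' B' p hA hB hB (hsp p hp)
  have hsnd : HasFDerivAt (fun q : ℝ × ℝ => τ * q.2)
      (τ • ContinuousLinearMap.snd ℝ ℝ ℝ) p :=
    ((ContinuousLinearMap.snd ℝ ℝ ℝ).hasFDerivAt).const_mul τ
  have hg1 : HasFDerivAt (fun q => py v q / omegT v q - τ * q.2) _ p := hD1.sub hsnd
  have heq1 : px u =ᶠ[nhds p] fun q => py v q / omegT v q - τ * q.2 := by
    filter_upwards [hpΩ] with q hq using htwinx q hq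
  have hfd1 : fderiv ℝ (px u) p = _ := heq1.fderiv_eq.trans hg1.fderiv
  -- derivative of the y-twin relation
  have hD2 := key_div (px v) (py v) (fun q => -px v q) A' B' (-A') p hA hB hA.neg (hsp p hp)
  have hfst : HasFDerivAt (fun q : ℝ × ℝ => τ * q.1)
      (τ • ContinuousLinearMap.fst ℝ ℝ ℝ) p :=
    ((ContinuousLinearMap.fst ℝ ℝ ℝ).hasFDerivAt).const_mul τ
  have hg2 : HasFDerivAt (fun q => -px v q / omegT v q + τ * q.1) _ p := hD2.add hfst
  have heq2 : py u =ᶠ[nhds p] fun q => -px v q / omegT v q + τ * q.1 := by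
    filter_upwards [hpΩ] with q hq using htwiny q hq
  have hfd2 : fderiv ℝ (py u) p = _ := heq2.fderiv_eq.trans hg2.fderiv
  -- the four second partials of u
  have hP : py (px u) p = ((1 - a ^ 2) * t + a * b * m) / w ^ 3 - τ := by
    show fderiv ℝ (px u) p (0, 1) = _
    rw [hfd1]
    simp only [hA', hB', ContinuousLinearMap.sub_apply, ContinuousLinearMap.add_apply,
      ContinuousLinearMap.smul_apply, ContinuousLinearMap.comp_apply,
      ContinuousLinearMap.apply_apply, ContinuousLinearMap.coe_snd', smul_eq_mul, mul_one, mul_zero]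
    rw [← ha, ← hb, ← hwdef, ← hm, ← ht]
    rw [hww3]; ring
  have hQ : px (px u) p = ((1 - a ^ 2) * m + a * b * r) / w ^ 3 := by
    show fderiv ℝ (px u) p (1, 0) = _
    rw [hfd1]
    simp only [hA', hB', ContinuousLinearMap.sub_apply, ContinuousLinearMap.add_apply,
      ContinuousLinearMap.smul_apply, ContinuousLinearMap.comp_apply,
      ContinuousLinearMap.apply_apply, ContinuousLinearMap.coe_snd', smul_eq_mul, mul_one, mul_zero]
    rw [← ha, ← hb, ← hwdef, hsymm, ← hr]
    rw [hww3]; ring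
  have hR : py (py u) p = -(((1 - b ^ 2) * m + a * b * t) / w ^ 3) := by
    show fderiv ℝ (py u) p (0, 1) = _
    rw [hfd2]
    simp only [hA', hB', ContinuousLinearMap.add_apply, ContinuousLinearMap.smul_apply,
      ContinuousLinearMap.neg_apply, ContinuousLinearMap.comp_apply,
      ContinuousLinearMap.apply_apply, ContinuousLinearMap.coe_fst', smul_eq_mul, mul_one, mul_zero]
    rw [← ha, ← hb, ← hwdef, ← hm, ← ht]
    rw [hww3]; ring
  have hP2 : px (py u) p = -(((1 - b ^ 2) * r + a * b * m) / w ^ 3) + τ := by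
    show fderiv ℝ (py u) p (1, 0) = _
    rw [hfd2]
    simp only [hA', hB', ContinuousLinearMap.add_apply, ContinuousLinearMap.smul_apply,
      ContinuousLinearMap.neg_apply, ContinuousLinearMap.comp_apply,
      ContinuousLinearMap.apply_apply, ContinuousLinearMap.coe_fst', smul_eq_mul, mul_one, mul_zero]
    rw [← ha, ← hb, ← hwdef, hsymm, ← hr]
    rw [hww3]; ring
  -- symmetry of second derivatives of u
  have hsymu : py (px u) p = px (py u) p := by
    show fderiv ℝ (fun q => fderiv ℝ u q (1, 0)) p (0, 1)
        = fderiv ℝ (fun q => fderiv ℝ u q (0, 1)) p (1, 0)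
    rw [pxpx u p hu2 (1, 0) (0, 1), pxpx u p hu2 (0, 1) (1, 0)]
    exact symm2 u p hu2 (0, 1) (1, 0)
  have hE : ((1 - a ^ 2) * t + a * b * m) / w ^ 3 - τ
      = -(((1 - b ^ 2) * r + a * b * m) / w ^ 3) + τ := by
    rw [← hP, ← hP2]; exact hsymu
  rw [hP, hQ, hR, hvxx, hvxy, hvyy]
  have := alg a b r m t τ w hw hw2 hE
  linarith [this]
end
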